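/- arXiv:1902.05860 — 2 statements merged into one kernel-verified Lean document; each statement's English description precedes it below -/
import Mathlib

section
/- Let V be a finite set with |V| = n ≥ 1. There exists an integer k with 1 ≤ k ≤ n such that for every probability distribution p on V the following holds: if (X_t)_{t≥1} are i.i.d. with law p and (A_t)_{t≥2} are i.i.d. uniformly random k-element subsets of V independent of (X_t), then the capture time T = min{ t ≥ 2 : X_t ∈ A_t } satisfies k + E[T] ≤ ⌈2√n⌉ + 1. -/
open MeasureTheory ProbabilityTheory
open scoped ENNReal

section Aux

open Finset

private lemma throttle_arith (n : ℕ) (hn1 : 1 ≤ n) :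
    1 ≤ ⌈Real.sqrt n⌉₊ ∧ ⌈Real.sqrt n⌉₊ ≤ n ∧
      ⌈Real.sqrt n⌉₊ * ⌈Real.sqrt n⌉₊ + n ≤ ⌈Real.sqrt n⌉₊ * ⌈2 * Real.sqrt n⌉₊ := by
  have hs0 : 0 < Real.sqrt n := Real.sqrt_pos.mpr (by exact_mod_cast hn1)
  have hs2 : Real.sqrt n ^ 2 = n := Real.sq_sqrt (by positivity)
  have hs1 : 1 ≤ Real.sqrt n := by
    have h := Real.sqrt_le_sqrt (show (1:ℝ) ≤ n by exact_mod_cast hn1)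
    rwa [Real.sqrt_one] at h
  set s := Real.sqrt n with hsdef
  set k := ⌈s⌉₊ with hkdef
  set m := ⌈2 * s⌉₊ with hmdef
  have hk1 : 1 ≤ k := Nat.ceil_pos.mpr hs0
  have hsk : s ≤ k := Nat.le_ceil _
  have hks : (k : ℝ) < s + 1 := Nat.ceil_lt_add_one hs0.le
  have hkn : k ≤ n := Nat.ceil_le.mpr (by nlinarith)
  have h2sm : 2 * s ≤ m := Nat.le_ceil _
  have hm2k : m ≤ 2 * k := Nat.ceil_le.mpr (by push_cast; linarith)
  have hnk2 : n ≤ k * k := by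
    have : (n : ℝ) ≤ (k : ℝ) * k := by nlinarith
    exact_mod_cast this
  refine ⟨hk1, hkn, ?_⟩
  have h2k1m : 2 * k - 1 ≤ m := by
    have h1 : ((2 * k - 2 : ℕ) : ℝ) < m := by
      have h2 : ((2 * k - 2 : ℕ) : ℝ) = 2 * (k : ℝ) - 2 := by
        have : 2 ≤ 2 * k := by omega
        push_cast [this]; ring
      rw [h2]; linarith
    have : 2 * k - 2 < m := by exact_mod_cast h1
    omega
  rcases (by omega : m = 2 * k ∨ m = 2 * k - 1) with hc | hc
  · rw [hc]
    have : k * (2 * k) = k * k + k * k := by ring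
    rw [this]; omega
  · have hm1 : m + 1 = 2 * k := by omega
    have he : k * m + k = 2 * (k * k) := by
      calc k * m + k = k * (m + 1) := by ring
        _ = k * (2 * k) := by rw [hm1]
        _ = 2 * (k * k) := by ring
    have hm' : (m : ℝ) + 1 = 2 * k := by exact_mod_cast hm1
    have hreal : (n : ℝ) + k < (k : ℝ) * k + 1 := by nlinarith
    have hnat : n + k < k * k + 1 := by exact_mod_cast hreal
    linarith

private lemma throttle_count_contain {V : Type*} [Fintype V] [DecidableEq V]
    (k : ℕ) (hk1 : 1 ≤ k) (x : V) :
    (((univ : Finset V).powersetCard k).filter (fun a => x ∈ a)).card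
      = (Fintype.card V - 1).choose (k - 1) := by
  have h : (((univ : Finset V).powersetCard k).filter (fun a => x ∈ a)).card
      = (((univ : Finset V).erase x).powersetCard (k - 1)).card := by
    apply Finset.card_bij' (fun a _ => a.erase x) (fun b _ => insert x b)
    · intro a ha
      simp only [mem_filter] at ha
      exact insert_erase ha.2
    · intro b hb
      simp only [mem_powersetCard] at hb
      have hxb : x ∉ b := fun hx => (mem_erase.mp (hb.1 hx)).1 rfl
      exact erase_insert hxb
    · intro a ha
      simp only [mem_filter, mem_powersetCard] at ha
      simp only [mem_powersetCard]
      exact ⟨erase_subset_erase x ha.1.1, by rw [card_erase_of_mem ha.2, ha.1.2]⟩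
    · intro b hb
      simp only [mem_powersetCard] at hb
      have hxb : x ∉ b := fun hx => (mem_erase.mp (hb.1 hx)).1 rfl
      simp only [mem_filter, mem_powersetCard]
      refine ⟨⟨subset_univ _, ?_⟩, mem_insert_self _ _⟩
      rw [card_insert_of_notMem hxb, hb.2]; omega
  rw [h, card_powersetCard, card_erase_of_mem (mem_univ x), card_univ]

private lemma throttle_fiber_sum {Ω γ : Type*} [MeasurableSpace Ω]
    (μ : MeasureTheory.Measure Ω)
    [MeasurableSpace γ] [MeasurableSingletonClass γ]
    (W : Ω → γ) (hW : Measurable W) (D : Finset γ) :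
    μ (W ⁻¹' ↑D) = ∑ z ∈ D, μ (W ⁻¹' {z}) := by
  have h : (↑D : Set γ) = ⋃ z ∈ D, {z} := by ext z; simp
  rw [h, Set.preimage_iUnion₂,
    measure_biUnion_finset (fun z _ y _ hzy => Set.disjoint_iff_inter_eq_empty.mpr (by
        ext ω; simp only [Set.mem_inter_iff, Set.mem_preimage, Set.mem_singleton_iff,
          Set.mem_empty_iff_false, iff_false, not_and]
        intro h1 h2; exact hzy (h1 ▸ h2 ▸ rfl)))
      (fun z _ => hW (measurableSet_singleton z))]

private lemma throttle_atomic_meas {Ω V W : Type*} [MeasurableSpace Ω]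
    [MeasurableSpace V] [MeasurableSpace W]
    [MeasurableSingletonClass V] [MeasurableSingletonClass W]
    (μ : MeasureTheory.Measure Ω)
    (X : ℕ → Ω → V) (A : ℕ → Ω → W)
    (hX : iIndepFun X μ)
    (hA : iIndepFun A μ)
    (hXA : IndepFun (fun ω => fun t => X t ω) (fun ω => fun t => A t ω) μ)
    (S : Finset ℕ) (f : ℕ → V) (g : ℕ → W) :
    μ (⋂ t ∈ S, (X t ⁻¹' {f t} ∩ A t ⁻¹' {g t}))
      = ∏ t ∈ S, (μ (X t ⁻¹' {f t}) * μ (A t ⁻¹' {g t})) := by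
  have hsX : MeasurableSet (⋂ t ∈ S, Function.eval t ⁻¹' {f t} : Set (ℕ → V)) :=
    MeasurableSet.biInter S.countable_toSet
      (fun t _ => measurable_pi_apply t (measurableSet_singleton _))
  have hsA : MeasurableSet (⋂ t ∈ S, Function.eval t ⁻¹' {g t} : Set (ℕ → W)) :=
    MeasurableSet.biInter S.countable_toSet
      (fun t _ => measurable_pi_apply t (measurableSet_singleton _))
  have h1 : (⋂ t ∈ S, (X t ⁻¹' {f t} ∩ A t ⁻¹' {g t}))
      = (fun ω => fun t => X t ω) ⁻¹' (⋂ t ∈ S, Function.eval t ⁻¹' {f t})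
        ∩ (fun ω => fun t => A t ω) ⁻¹' (⋂ t ∈ S, Function.eval t ⁻¹' {g t}) := by
    ext ω
    simp only [Set.mem_iInter, Set.mem_inter_iff, Set.mem_preimage, Function.eval,
      Set.mem_singleton_iff]
    exact ⟨fun h => ⟨fun i hi => (h i hi).1, fun i hi => (h i hi).2⟩,
      fun h i hi => ⟨h.1 i hi, h.2 i hi⟩⟩
  have h2 : (fun ω => fun t => X t ω) ⁻¹' (⋂ t ∈ S, Function.eval t ⁻¹' {f t})
      = ⋂ t ∈ S, X t ⁻¹' {f t} := by
    ext ω; simp [Function.eval]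
  have h3 : (fun ω => fun t => A t ω) ⁻¹' (⋂ t ∈ S, Function.eval t ⁻¹' {g t})
      = ⋂ t ∈ S, A t ⁻¹' {g t} := by
    ext ω; simp [Function.eval]
  rw [h1, hXA.measure_inter_preimage_eq_mul _ _ hsX hsA, h2, h3,
    hX.measure_inter_preimage_eq_mul S (sets := fun t => {f t})
      (fun t _ => measurableSet_singleton _),
    hA.measure_inter_preimage_eq_mul S (sets := fun t => {g t})
      (fun t _ => measurableSet_singleton _),
    ← Finset.prod_mul_distrib]

private lemma throttle_joint_prod {Ω V W : Type*} [MeasurableSpace Ω]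
    [MeasurableSpace V] [MeasurableSpace W]
    [MeasurableSingletonClass V] [MeasurableSingletonClass W]
    [Fintype V] [Fintype W] [Nonempty V] [Nonempty W]
    (μ : MeasureTheory.Measure Ω)
    (X : ℕ → Ω → V) (A : ℕ → Ω → W)
    (hXm : ∀ t, Measurable (X t)) (hAm : ∀ t, Measurable (A t))
    (hX : iIndepFun X μ)
    (hA : iIndepFun A μ)
    (hXA : IndepFun (fun ω => fun t => X t ω) (fun ω => fun t => A t ω) μ)
    (C : Finset (V × W)) (S : Finset ℕ) :
    μ (⋂ t ∈ S, (fun ω => (X t ω, A t ω)) ⁻¹' ↑C)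
      = ∏ t ∈ S, μ ((fun ω => (X t ω, A t ω)) ⁻¹' ↑C) := by
  classical
  set Z : ℕ → Ω → V × W := fun t ω => (X t ω, A t ω) with hZ
  have hZm : ∀ t, Measurable (Z t) := fun t => (hXm t).prodMk (hAm t)
  have hpoint : ∀ (t : ℕ) (z : V × W),
      μ (Z t ⁻¹' {z}) = μ (X t ⁻¹' {z.1}) * μ (A t ⁻¹' {z.2}) := by
    intro t z
    have h1 : Z t ⁻¹' {z} = ⋂ u ∈ ({t} : Finset ℕ), (X u ⁻¹' {z.1} ∩ A u ⁻¹' {z.2}) := by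
      ext ω; simp [hZ, Prod.ext_iff]
    rw [h1, throttle_atomic_meas μ X A hX hA hXA {t} (fun _ => z.1) (fun _ => z.2)]
    simp
  have hsingle : ∀ t : ℕ,
      μ (Z t ⁻¹' ↑C) = ∑ z ∈ C, μ (X t ⁻¹' {z.1}) * μ (A t ⁻¹' {z.2}) := by
    intro t
    rw [throttle_fiber_sum μ (Z t) (hZm t) C]
    exact Finset.sum_congr rfl fun z _ => hpoint t z
  set Wmap : Ω → (↥S → V × W) := fun ω t => Z ↑t ω with hWmap
  have hWm : Measurable Wmap := measurable_pi_lambda _ fun t => hZm ↑t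
  set D : Finset (↥S → V × W) := Fintype.piFinset (fun _ => C) with hD
  have hset : (⋂ t ∈ S, Z t ⁻¹' ↑C) = Wmap ⁻¹' ↑D := by
    ext ω
    simp only [Set.mem_iInter, Set.mem_preimage, Finset.mem_coe, hD,
      Fintype.mem_piFinset, hWmap, Subtype.forall]
  have hfib : ∀ h : ↥S → V × W,
      μ (Wmap ⁻¹' {h})
        = ∏ t ∈ S.attach, (μ (X ↑t ⁻¹' {(h t).1}) * μ (A ↑t ⁻¹' {(h t).2})) := by
    intro h
    set f : ℕ → V := fun t => if ht : t ∈ S then (h ⟨t, ht⟩).1 else Classical.arbitrary V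
      with hf
    set g : ℕ → W := fun t => if ht : t ∈ S then (h ⟨t, ht⟩).2 else Classical.arbitrary W
      with hg
    have h1 : Wmap ⁻¹' {h} = ⋂ t ∈ S, (X t ⁻¹' {f t} ∩ A t ⁻¹' {g t}) := by
      ext ω
      simp only [Set.mem_preimage, Set.mem_singleton_iff, funext_iff, hWmap, Subtype.forall,
        Set.mem_iInter, Set.mem_inter_iff, hf, hg, hZ, Prod.ext_iff]
      constructor
      · intro H t ht
        rw [dif_pos ht, dif_pos ht]
        exact (H t ht)
      · intro H t ht
        have := H t ht
        rw [dif_pos ht, dif_pos ht] at this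
        exact this
    rw [h1, throttle_atomic_meas μ X A hX hA hXA S f g, ← Finset.prod_attach S
      (fun t => μ (X t ⁻¹' {f t}) * μ (A t ⁻¹' {g t}))]
    refine Finset.prod_congr rfl fun t _ => ?_
    rw [hf, hg]
    simp only [dif_pos t.2]
  rw [hset, throttle_fiber_sum μ Wmap hWm D]
  calc ∑ h ∈ D, μ (Wmap ⁻¹' {h})
      = ∑ h ∈ D, ∏ t ∈ S.attach, (μ (X ↑t ⁻¹' {(h t).1}) * μ (A ↑t ⁻¹' {(h t).2})) :=
        Finset.sum_congr rfl fun h _ => hfib h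
    _ = ∏ t ∈ S.attach, ∑ z ∈ C, (μ (X ↑t ⁻¹' {z.1}) * μ (A ↑t ⁻¹' {z.2})) := by
        rw [← Finset.univ_eq_attach, Finset.prod_univ_sum]
    _ = ∏ t ∈ S.attach, μ (Z ↑t ⁻¹' ↑C) :=
        Finset.prod_congr rfl fun t _ => (hsingle ↑t).symm
    _ = ∏ t ∈ S, μ (Z t ⁻¹' ↑C) := Finset.prod_attach S (fun t => μ (Z t ⁻¹' ↑C))

private lemma throttle_capture_sum {V : Type*} [Fintype V] [DecidableEq V]
    (n k : ℕ) (hn : Fintype.card V = n)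
    (hn1 : 1 ≤ n) (hk1 : 1 ≤ k) (hkn : k ≤ n)
    (hne : ((Finset.univ : Finset V).powersetCard k).Nonempty)
    (p : PMF V) :
    (∑ z ∈ (univ : Finset (V × Finset V)).filter (fun z => z.1 ∈ z.2),
      p z.1 * (PMF.uniformOfFinset _ hne) z.2) = (k : ℝ≥0∞) * (n : ℝ≥0∞)⁻¹ := by
  classical
  set P := (univ : Finset V).powersetCard k with hP
  set u := PMF.uniformOfFinset P hne with hu
  have hPcard : P.card = n.choose k := by rw [hP, card_powersetCard, card_univ, hn]
  have hn0 : (n : ℝ≥0∞) ≠ 0 := Nat.cast_ne_zero.mpr (by omega)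
  have hnT : (n : ℝ≥0∞) ≠ ∞ := ENNReal.natCast_ne_top n
  have hNk0 : ((n.choose k : ℕ) : ℝ≥0∞) ≠ 0 :=
    Nat.cast_ne_zero.mpr (Nat.choose_pos hkn).ne'
  have hNkT : ((n.choose k : ℕ) : ℝ≥0∞) ≠ ∞ := ENNReal.natCast_ne_top _
  have hkey : (n : ℝ≥0∞) * (((n-1).choose (k-1) : ℕ) : ℝ≥0∞)
      = (k : ℝ≥0∞) * ((n.choose k : ℕ) : ℝ≥0∞) := by
    have hnat : n * (n-1).choose (k-1) = k * (n.choose k) := by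
      have := Nat.add_one_mul_choose_eq (n-1) (k-1)
      have h1 : n - 1 + 1 = n := by omega
      have h2 : k - 1 + 1 = k := by omega
      rw [h1, h2] at this
      rw [this, Nat.mul_comm]
    exact_mod_cast congrArg (fun i : ℕ => (i : ℝ≥0∞)) hnat
  have hratio : (((n-1).choose (k-1) : ℕ) : ℝ≥0∞) * ((n.choose k : ℕ) : ℝ≥0∞)⁻¹
      = (k : ℝ≥0∞) * (n : ℝ≥0∞)⁻¹ := by
    calc (((n-1).choose (k-1) : ℕ) : ℝ≥0∞) * ((n.choose k : ℕ) : ℝ≥0∞)⁻¹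
        = ((n : ℝ≥0∞)⁻¹ * n) * (((n-1).choose (k-1) : ℕ) : ℝ≥0∞)
            * ((n.choose k : ℕ) : ℝ≥0∞)⁻¹ := by
          rw [ENNReal.inv_mul_cancel hn0 hnT, one_mul]
      _ = (n : ℝ≥0∞)⁻¹ * ((n : ℝ≥0∞) * (((n-1).choose (k-1) : ℕ) : ℝ≥0∞))
            * ((n.choose k : ℕ) : ℝ≥0∞)⁻¹ := by
          ring
      _ = (n : ℝ≥0∞)⁻¹ * ((k : ℝ≥0∞) * ((n.choose k : ℕ) : ℝ≥0∞))
            * ((n.choose k : ℕ) : ℝ≥0∞)⁻¹ := by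
          rw [hkey]
      _ = ((k : ℝ≥0∞) * (n : ℝ≥0∞)⁻¹)
            * (((n.choose k : ℕ) : ℝ≥0∞) * ((n.choose k : ℕ) : ℝ≥0∞)⁻¹) := by
          ring
      _ = (k : ℝ≥0∞) * (n : ℝ≥0∞)⁻¹ := by
          rw [ENNReal.mul_inv_cancel hNk0 hNkT, mul_one]
  have hinner : ∀ x : V, (∑ a : Finset V, if x ∈ a then u a else 0)
      = (k : ℝ≥0∞) * (n : ℝ≥0∞)⁻¹ := by
    intro x
    have h1 : ∀ a : Finset V, (if x ∈ a then u a else 0)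
        = if a ∈ P.filter (fun a => x ∈ a) then ((n.choose k : ℕ) : ℝ≥0∞)⁻¹ else 0 := by
      intro a
      by_cases h1 : x ∈ a <;> by_cases h2 : a ∈ P <;>
        simp [hu, PMF.uniformOfFinset_apply, mem_filter, h1, h2, hPcard]
    rw [Finset.sum_congr rfl (fun a _ => h1 a), Finset.sum_ite_mem, univ_inter,
      Finset.sum_const, throttle_count_contain k hk1 x, hn, nsmul_eq_mul, hratio]
  have hp1 : (∑ x : V, p x) = 1 := by
    have := p.tsum_coe
    rwa [tsum_fintype] at this
  calc (∑ z ∈ (univ : Finset (V × Finset V)).filter (fun z => z.1 ∈ z.2), p z.1 * u z.2)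
      = ∑ z : V × Finset V, (if z.1 ∈ z.2 then p z.1 * u z.2 else 0) := by
        rw [Finset.sum_filter]
    _ = ∑ x : V, ∑ a : Finset V, (if x ∈ a then p x * u a else 0) := by
        rw [Fintype.sum_prod_type]
    _ = ∑ x : V, p x * ∑ a : Finset V, (if x ∈ a then u a else 0) := by
        refine Finset.sum_congr rfl fun x _ => ?_
        rw [Finset.mul_sum]
        refine Finset.sum_congr rfl fun a _ => ?_
        rw [mul_ite, mul_zero]
    _ = ∑ x : V, p x * ((k : ℝ≥0∞) * (n : ℝ≥0∞)⁻¹) := by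
        refine Finset.sum_congr rfl fun x _ => ?_; rw [hinner x]
    _ = (∑ x : V, p x) * ((k : ℝ≥0∞) * (n : ℝ≥0∞)⁻¹) := by rw [Finset.sum_mul]
    _ = (k : ℝ≥0∞) * (n : ℝ≥0∞)⁻¹ := by rw [hp1, one_mul]

end Aux

/-- The unknown gambler throttling number of the complete graph on
`n` vertices is at most `⌈2√n⌉ + 1`: for some `1 ≤ k ≤ n`, `k` cops jumping each turn
(after the first) to a uniformly random `k`-subset satisfy `k + E[T] ≤ ⌈2√n⌉ + 1`
against every gambler distribution. -/
theorem unknown_gambler_throttling_complete_graph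
    {V : Type*} [Fintype V] [DecidableEq V]
    [MeasurableSpace V] [MeasurableSingletonClass V]
    [MeasurableSpace (Finset V)] [MeasurableSingletonClass (Finset V)]
    (n : ℕ) (hn : Fintype.card V = n) (hn1 : 1 ≤ n) :
    ∃ (k : ℕ) (_ : 1 ≤ k) (_ : k ≤ n)
      (hne : ((Finset.univ : Finset V).powersetCard k).Nonempty),
      ∀ (p : PMF V) (Ω : Type) (_ : MeasurableSpace Ω) (μ : Measure Ω)
        (_ : IsProbabilityMeasure μ)
        (X : ℕ → Ω → V) (A : ℕ → Ω → Finset V),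
        (∀ t, Measurable (X t)) → (∀ t, Measurable (A t)) →
        iIndepFun X μ →
        (∀ t, μ.map (X t) = p.toMeasure) →
        iIndepFun A μ →
        (∀ t, μ.map (A t) =
          (PMF.uniformOfFinset ((Finset.univ : Finset V).powersetCard k) hne).toMeasure) →
        IndepFun (fun ω => fun t => X t ω) (fun ω => fun t => A t ω) μ →
        ∀ T : Ω → ℝ≥0∞,
        (∀ ω, T ω = sInf {τ : ℝ≥0∞ | ∃ t : ℕ, τ = t ∧ 2 ≤ t ∧ X t ω ∈ A t ω}) →
        (k : ℝ≥0∞) + ∫⁻ ω, T ω ∂μ ≤ (⌈2 * Real.sqrt n⌉₊ : ℝ≥0∞) + 1 := by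
  classical
  obtain ⟨hk1, hkn, hkm⟩ := throttle_arith n hn1
  set k := ⌈Real.sqrt n⌉₊ with hkdef
  set m := ⌈2 * Real.sqrt n⌉₊ with hmdef
  have hne : ((Finset.univ : Finset V).powersetCard k).Nonempty := by
    obtain ⟨a, hasub, hacard⟩ := Finset.exists_subset_card_eq
      (show k ≤ (Finset.univ : Finset V).card by rw [Finset.card_univ, hn]; exact hkn)
    exact ⟨a, Finset.mem_powersetCard.mpr ⟨hasub, hacard⟩⟩
  refine ⟨k, hk1, hkn, hne, ?_⟩
  intro p Ω mΩ μ hμ X A hXm hAm hX hlawX hA hlawA hXA T hT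
  haveI : Nonempty V := Fintype.card_pos_iff.mp (by rw [hn]; omega)
  set u := PMF.uniformOfFinset ((Finset.univ : Finset V).powersetCard k) hne with hu
  -- laws of the coordinates
  have hXval : ∀ (t : ℕ) (x : V), μ (X t ⁻¹' {x}) = p x := by
    intro t x
    calc μ (X t ⁻¹' {x}) = (μ.map (X t)) {x} :=
          (Measure.map_apply (hXm t) (measurableSet_singleton x)).symm
      _ = p.toMeasure {x} := by rw [hlawX t]
      _ = p x := p.toMeasure_apply_singleton x (measurableSet_singleton x)
  have hAval : ∀ (t : ℕ) (a : Finset V), μ (A t ⁻¹' {a}) = u a := by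
    intro t a
    calc μ (A t ⁻¹' {a}) = (μ.map (A t)) {a} :=
          (Measure.map_apply (hAm t) (measurableSet_singleton a)).symm
      _ = u.toMeasure {a} := by rw [hlawA t]
      _ = u a := u.toMeasure_apply_singleton a (measurableSet_singleton a)
  -- miss set and probabilities
  set Cfin : Finset (V × Finset V) :=
    (Finset.univ : Finset (V × Finset V)).filter (fun z => z.1 ∉ z.2) with hCfin
  set r : ℝ≥0∞ := ∑ z ∈ Cfin, p z.1 * u z.2 with hr
  set q : ℝ≥0∞ := (k : ℝ≥0∞) * (n : ℝ≥0∞)⁻¹ with hq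
  have hk0 : (k : ℝ≥0∞) ≠ 0 := Nat.cast_ne_zero.mpr (by omega)
  have hkT : (k : ℝ≥0∞) ≠ ∞ := ENNReal.natCast_ne_top k
  have hqval : (∑ z ∈ (Finset.univ : Finset (V × Finset V)).filter (fun z => z.1 ∈ z.2),
      p z.1 * u z.2) = q :=
    throttle_capture_sum n k hn hn1 hk1 hkn hne p
  have hu1 : (∑ a : Finset V, u a) = 1 := by
    have := u.tsum_coe
    rwa [tsum_fintype] at this
  have hp1 : (∑ x : V, p x) = 1 := by
    have := p.tsum_coe
    rwa [tsum_fintype] at this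
  have htot : (∑ z : V × Finset V, p z.1 * u z.2) = 1 := by
    rw [Fintype.sum_prod_type]
    calc (∑ x : V, ∑ a : Finset V, p x * u a) = ∑ x : V, p x * ∑ a : Finset V, u a :=
          Finset.sum_congr rfl fun x _ => (Finset.mul_sum _ _ _).symm
      _ = 1 := by rw [hu1]; simp [hp1]
  have hqr : q + r = 1 := by
    rw [← hqval, hr, hCfin]
    rw [Finset.sum_filter_add_sum_filter_not Finset.univ (fun z : V × Finset V => z.1 ∈ z.2)
      (fun z => p z.1 * u z.2)]
    exact htot
  have hr_le : r ≤ 1 := by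
    rw [← hqr]; exact le_add_self
  have hr_ne_top : r ≠ ∞ := ne_top_of_le_ne_top ENNReal.one_ne_top hr_le
  have h1r : 1 - r = q := ENNReal.sub_eq_of_eq_add hr_ne_top hqr.symm
  -- per-step miss probability
  have hsingle : ∀ t : ℕ, μ ((fun ω => (X t ω, A t ω)) ⁻¹' ↑Cfin) = r := by
    intro t
    rw [throttle_fiber_sum μ _ ((hXm t).prodMk (hAm t)) Cfin, hr]
    refine Finset.sum_congr rfl fun z _ => ?_
    have h1 : (fun ω => (X t ω, A t ω)) ⁻¹' {z}
        = ⋂ s ∈ ({t} : Finset ℕ), (X s ⁻¹' {z.1} ∩ A s ⁻¹' {z.2}) := by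
      ext ω; simp [Prod.ext_iff]
    rw [h1, throttle_atomic_meas μ X A hX hA hXA {t} (fun _ => z.1) (fun _ => z.2)]
    simp [hXval t z.1, hAval t z.2]
  have hU : ∀ S : Finset ℕ,
      μ (⋂ t ∈ S, (fun ω => (X t ω, A t ω)) ⁻¹' ↑Cfin) = r ^ S.card := by
    intro S
    rw [throttle_joint_prod μ X A hXm hAm hX hA hXA Cfin S,
      Finset.prod_congr rfl (fun t _ => hsingle t), Finset.prod_const]
  -- the events "no capture up to time j+1"
  set U : ℕ → Set Ω :=
    fun j => ⋂ t ∈ Finset.Icc 2 (j+1), (fun ω => (X t ω, A t ω)) ⁻¹' ↑Cfin with hUdef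
  have hUmeas : ∀ j, MeasurableSet (U j) := fun j =>
    MeasurableSet.biInter (Finset.Icc 2 (j+1)).countable_toSet
      (fun t _ => ((hXm t).prodMk (hAm t)) Cfin.measurableSet)
  have hUval : ∀ j, μ (U j) = r ^ j := by
    intro j
    rw [hUdef, hU (Finset.Icc 2 (j+1))]
    congr 1
    rw [Nat.card_Icc]
    omega
  -- pointwise bound on T
  have hpt : ∀ ω, T ω ≤ 1 + ∑' j : ℕ, (U j).indicator (fun _ => (1:ℝ≥0∞)) ω := by
    intro ω
    rw [hT ω]
    by_cases hcap : ∃ t : ℕ, 2 ≤ t ∧ X t ω ∈ A t ω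
    · set t0 := Nat.find hcap with ht0
      have h0 := Nat.find_spec hcap
      have hle : sInf {τ : ℝ≥0∞ | ∃ t : ℕ, τ = t ∧ 2 ≤ t ∧ X t ω ∈ A t ω} ≤ (t0 : ℝ≥0∞) :=
        sInf_le ⟨t0, rfl, h0.1, h0.2⟩
      refine hle.trans ?_
      have hmem : ∀ j ∈ Finset.range (t0 - 1), ω ∈ U j := by
        intro j hj
        rw [Finset.mem_range] at hj
        rw [hUdef]
        simp only [Set.mem_iInter]
        intro t ht
        rw [Finset.mem_Icc] at ht
        simp only [Set.mem_preimage, Finset.mem_coe, hCfin, Finset.mem_filter,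
          Finset.mem_univ, true_and]
        intro hmem'
        have htlt : t < t0 := by omega
        exact (Nat.find_min hcap htlt) ⟨ht.1, hmem'⟩
      calc (t0 : ℝ≥0∞) = 1 + ((t0 - 1 : ℕ) : ℝ≥0∞) := by
            rw [← Nat.cast_one, ← Nat.cast_add]
            congr 1
            have := h0.1
            omega
        _ = 1 + ∑ j ∈ Finset.range (t0 - 1), (U j).indicator (fun _ => (1:ℝ≥0∞)) ω := by
            congr 1
            rw [Finset.sum_congr rfl (fun j hj => Set.indicator_of_mem (hmem j hj) _),
              Finset.sum_const, Finset.card_range, nsmul_eq_mul, mul_one]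
        _ ≤ 1 + ∑' j : ℕ, (U j).indicator (fun _ => (1:ℝ≥0∞)) ω :=
            add_le_add_right (ENNReal.sum_le_tsum (Finset.range (t0 - 1))) 1
    · have hall : ∀ j, ω ∈ U j := by
        intro j
        rw [hUdef]
        simp only [Set.mem_iInter]
        intro t ht
        rw [Finset.mem_Icc] at ht
        simp only [Set.mem_preimage, Finset.mem_coe, hCfin, Finset.mem_filter,
          Finset.mem_univ, true_and]
        intro hmem'
        exact hcap ⟨t, ht.1, hmem'⟩
      have htop : (∑' j : ℕ, (U j).indicator (fun _ => (1:ℝ≥0∞)) ω) = ∞ := by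
        rw [tsum_congr (fun j => Set.indicator_of_mem (hall j) _)]
        exact ENNReal.tsum_const_eq_top_of_ne_zero one_ne_zero
      rw [htop]
      simp
  -- integrate
  have hint : ∫⁻ ω, T ω ∂μ ≤ 1 + (n : ℝ≥0∞) * (k : ℝ≥0∞)⁻¹ := by
    have hgeom : (∑' j : ℕ, r ^ j) = (n : ℝ≥0∞) * (k : ℝ≥0∞)⁻¹ := by
      rw [ENNReal.tsum_geometric, h1r, hq,
        ENNReal.mul_inv (Or.inl hk0) (Or.inl hkT), inv_inv, mul_comm]
    calc ∫⁻ ω, T ω ∂μ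
        ≤ ∫⁻ ω, (1 + ∑' j : ℕ, (U j).indicator (fun _ => (1:ℝ≥0∞)) ω) ∂μ :=
          lintegral_mono hpt
      _ = ∫⁻ _, (1:ℝ≥0∞) ∂μ + ∫⁻ ω, (∑' j : ℕ, (U j).indicator (fun _ => (1:ℝ≥0∞)) ω) ∂μ :=
          lintegral_add_left measurable_const _
      _ = 1 + ∑' j : ℕ, μ (U j) := by
          rw [lintegral_const, measure_univ, mul_one,
            lintegral_tsum (fun j => (measurable_const.indicator (hUmeas j)).aemeasurable)]
          congr 1
          refine tsum_congr fun j => ?_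
          exact lintegral_indicator_one (hUmeas j)
      _ = 1 + ∑' j : ℕ, r ^ j := by
          congr 1
          exact tsum_congr fun j => hUval j
      _ = 1 + (n : ℝ≥0∞) * (k : ℝ≥0∞)⁻¹ := by rw [hgeom]
  -- final arithmetic
  have hfinal : (k : ℝ≥0∞) + (n : ℝ≥0∞) * (k : ℝ≥0∞)⁻¹ ≤ (m : ℝ≥0∞) := by
    have hdiv : (k : ℝ≥0∞) + (n : ℝ≥0∞) * (k : ℝ≥0∞)⁻¹
        = ((k * k + n : ℕ) : ℝ≥0∞) * (k : ℝ≥0∞)⁻¹ := by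
      push_cast
      rw [add_mul]
      congr 1
      rw [mul_assoc, ENNReal.mul_inv_cancel hk0 hkT, mul_one]
    rw [hdiv]
    calc ((k * k + n : ℕ) : ℝ≥0∞) * (k : ℝ≥0∞)⁻¹
        ≤ ((k * m : ℕ) : ℝ≥0∞) * (k : ℝ≥0∞)⁻¹ :=
          mul_le_mul_left (by exact_mod_cast hkm) _
      _ = (m : ℝ≥0∞) := by
          push_cast
          rw [mul_comm (k : ℝ≥0∞) (m : ℝ≥0∞), mul_assoc,
            ENNReal.mul_inv_cancel hk0 hkT, mul_one]
  calc (k : ℝ≥0∞) + ∫⁻ ω, T ω ∂μ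
      ≤ (k : ℝ≥0∞) + (1 + (n : ℝ≥0∞) * (k : ℝ≥0∞)⁻¹) := add_le_add_right hint _
    _ = ((k : ℝ≥0∞) + (n : ℝ≥0∞) * (k : ℝ≥0∞)⁻¹) + 1 := by ring
    _ ≤ (m : ℝ≥0∞) + 1 := add_le_add_left hfinal 1
end

section
/- Let G be a simple graph on a finite vertex set V with |V| = n ≥ 2 and graph distance dist, and suppose G has a universal vertex (a vertex adjacent to every other vertex). Then there exist a positive integer k, initial cop positions c_1, …, c_k ∈ V, and response functions f_1, …, f_k : V → V such that for every probability distribution p on V and every i.i.d. sequence (X_t)_{t≥0} with law p, the capture time T = min{ t ≥ 1 : there exists j with t ≥ dist(c_j, f_j(X_0)) and X_t = f_j(X_0) } satisfies k + E[T] < ⌈2√n⌉ + 3. -/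
open MeasureTheory ProbabilityTheory
open scoped ENNReal

/-- Every graph on `n ≥ 2` vertices with a universal vertex has
1-observed gambler throttling number less than `⌈2√n⌉ + 3`, via a distributed
Watch-Move-Wait strategy. -/
theorem observed_throttling_universal_vertex
    {V : Type*} [Fintype V] [DecidableEq V]
    [MeasurableSpace V] [MeasurableSingletonClass V]
    (G : SimpleGraph V)
    (n : ℕ) (hn : Fintype.card V = n) (hn2 : 2 ≤ n)
    (huniv : ∃ u : V, ∀ v : V, v ≠ u → G.Adj u v) :
    ∃ (k : ℕ) (_ : 0 < k) (c : Fin k → V) (f : Fin k → V → V),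
      ∀ (p : PMF V) (Ω : Type) (_ : MeasurableSpace Ω) (μ : Measure Ω)
        (_ : IsProbabilityMeasure μ) (X : ℕ → Ω → V),
        (∀ t, Measurable (X t)) →
        iIndepFun X μ →
        (∀ t, μ.map (X t) = p.toMeasure) →
        ∀ T : Ω → ℝ≥0∞,
        (∀ ω, T ω = sInf {τ : ℝ≥0∞ | ∃ t : ℕ, τ = t ∧ 1 ≤ t ∧
          ∃ j : Fin k, G.dist (c j) (f j (X 0 ω)) ≤ t ∧ X t ω = f j (X 0 ω)}) →
        (k : ℝ≥0∞) + ∫⁻ ω, T ω ∂μ < (⌈2 * Real.sqrt n⌉₊ : ℝ≥0∞) + 3 := by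
  classical
  obtain ⟨u, hu⟩ := huniv
  set k := ⌈Real.sqrt n⌉₊ with hk_def
  have hnR : (0:ℝ) < n := by
    have : 0 < n := by omega
    exact_mod_cast this
  have hsq : (0:ℝ) ≤ Real.sqrt n := Real.sqrt_nonneg _
  have hk_pos : 0 < k := Nat.ceil_pos.mpr (Real.sqrt_pos.mpr hnR)
  have hnk : n ≤ k * k := by
    have h1 : Real.sqrt n ≤ (k:ℝ) := Nat.le_ceil _
    have h2 : Real.sqrt n * Real.sqrt n = (n:ℝ) := Real.mul_self_sqrt hnR.le
    have : (n:ℝ) ≤ (k:ℝ) * (k:ℝ) := by nlinarith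
    exact_mod_cast this
  -- vertex enumeration
  have hcard : Fintype.card V = n := hn
  let e : Fin n ≃ V := (Fintype.equivFinOfCardEq hcard).symm
  let idx : V → ℕ := fun v => (e.symm v : ℕ)
  have hidx_lt : ∀ v, idx v < n := fun v => (e.symm v).2
  let blk : V → Fin k := fun v =>
    ⟨idx v / k, (Nat.div_lt_iff_lt_mul hk_pos).mpr (lt_of_lt_of_le (hidx_lt v) hnk)⟩
  let f : Fin k → V → V := fun j v =>
    if h : (idx v / k) * k + (j : ℕ) < n then e ⟨(idx v / k) * k + (j : ℕ), h⟩ else v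
  refine ⟨k, hk_pos, fun _ => u, f, ?_⟩
  -- coverage lemma
  have hcov : ∀ v w : V, blk w = blk v → ∃ j : Fin k, w = f j v := by
    intro v w hbw
    have hdiv : idx w / k = idx v / k := by
      have := congrArg (fun i : Fin k => (i : ℕ)) hbw
      simpa [blk] using this
    refine ⟨⟨idx w % k, Nat.mod_lt _ hk_pos⟩, ?_⟩
    have hval : (idx v / k) * k + (idx w % k) = idx w := by
      rw [← hdiv]; exact Nat.div_add_mod' (idx w) k
    have hlt : (idx v / k) * k + (idx w % k) < n := by rw [hval]; exact hidx_lt w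
    have : f ⟨idx w % k, Nat.mod_lt _ hk_pos⟩ v = e ⟨(idx v / k) * k + (idx w % k), hlt⟩ := by
      simp only [f, dif_pos hlt]
    rw [this]
    have : (⟨(idx v / k) * k + (idx w % k), hlt⟩ : Fin n) = e.symm w := by
      apply Fin.ext; simp [hval, idx]
    rw [this, Equiv.apply_symm_apply]
  intro p Ω mΩ μ hμ X hXm hind hmap T hT
  have hmV : ∀ s : Set V, MeasurableSet s := fun s => s.toFinite.measurableSet
  have hdist : ∀ w : V, G.dist u w ≤ 1 := by
    intro w
    rcases eq_or_ne w u with rfl | hne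
    · rw [SimpleGraph.dist_self]; exact Nat.zero_le 1
    · exact le_of_eq (SimpleGraph.dist_eq_one_iff_adj.mpr (hu w hne))
  -- the target set and its probability
  set S : V → Set V := fun v => {w | ∃ j : Fin k, w = f j v} with hS_def
  set q : V → ℝ≥0∞ := fun v => p.toMeasure (S v) with hq_def
  have hq_le_one : ∀ v, q v ≤ 1 := fun v => prob_le_one
  -- tail events
  set A : ℕ → Set Ω := fun t => {ω | (t : ℝ≥0∞) < T ω} with hA_def
  have hTgt : ∀ ω (t : ℕ), ((t : ℝ≥0∞) < T ω ↔ ∀ s : ℕ, 1 ≤ s → s ≤ t → X s ω ∉ S (X 0 ω)) := by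
    intro ω t
    rw [hT ω]
    constructor
    · rintro h s hs1 hst ⟨j, hj⟩
      have hmem : ((s:ℝ≥0∞)) ∈ {τ : ℝ≥0∞ | ∃ t : ℕ, τ = t ∧ 1 ≤ t ∧
          ∃ j : Fin k, G.dist u (f j (X 0 ω)) ≤ t ∧ X t ω = f j (X 0 ω)} :=
        ⟨s, rfl, hs1, j, le_trans (hdist _) hs1, hj⟩
      have := lt_of_lt_of_le h (sInf_le hmem)
      exact absurd (Nat.cast_lt.mp this) (not_lt.mpr hst)
    · intro h
      have : ((t:ℝ≥0∞) + 1) ≤ sInf {τ : ℝ≥0∞ | ∃ t : ℕ, τ = t ∧ 1 ≤ t ∧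
          ∃ j : Fin k, G.dist u (f j (X 0 ω)) ≤ t ∧ X t ω = f j (X 0 ω)} := by
        apply le_sInf
        rintro τ ⟨s, rfl, hs1, j, -, hj⟩
        have hst : ¬ s ≤ t := fun hle => h s hs1 hle ⟨j, hj⟩
        have : t + 1 ≤ s := by omega
        exact_mod_cast this
      exact lt_of_lt_of_le (ENNReal.lt_add_right (ENNReal.natCast_ne_top t) one_ne_zero) this
  -- tail event decomposition
  have hAeq : ∀ t : ℕ, A t = ⋃ v : V,
      ((X 0 ⁻¹' {v}) ∩ ⋂ s ∈ Finset.Icc 1 t, X s ⁻¹' (S v)ᶜ) := by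
    intro t
    ext ω
    simp only [hA_def, Set.mem_setOf_eq, Set.mem_iUnion, Set.mem_inter_iff, Set.mem_preimage,
      Set.mem_singleton_iff, Set.mem_iInter, Set.mem_compl_iff, Finset.mem_Icc]
    rw [hTgt ω t]
    constructor
    · intro h
      exact ⟨X 0 ω, rfl, fun s hs => h s hs.1 hs.2⟩
    · rintro ⟨v, rfl, h⟩ s hs1 hst
      exact h s ⟨hs1, hst⟩
  have hAmeas : ∀ t : ℕ, MeasurableSet (A t) := by
    intro t
    rw [hAeq t]
    exact MeasurableSet.iUnion fun v => ((hXm 0) (hmV _)).inter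
      (Finset.measurableSet_biInter _ fun s _ => (hXm s) (hmV _))
  -- measure of tail events
  have hpreim : ∀ (i : ℕ) (B : Set V), μ (X i ⁻¹' B) = p.toMeasure B := by
    intro i B
    rw [← hmap i, Measure.map_apply (hXm i) (hmV B)]
  have hcompl : ∀ v, p.toMeasure (S v)ᶜ = 1 - q v := by
    intro v
    rw [measure_compl (hmV _) (measure_ne_top _ _), measure_univ]
  have hμA : ∀ t : ℕ, μ (A t) = ∑ v : V, p v * (1 - q v) ^ t := by
    intro t
    rw [hAeq t]
    rw [measure_iUnion ?_ ?_]
    · rw [tsum_fintype]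
      apply Finset.sum_congr rfl
      intro v _
      -- rewrite the intersection as a biInter over range (t+1)
      set Bv : ℕ → Set V := fun i => if i = 0 then {v} else (S v)ᶜ with hBv
      have hDeq : (X 0 ⁻¹' {v}) ∩ (⋂ s ∈ Finset.Icc 1 t, X s ⁻¹' (S v)ᶜ)
          = ⋂ i ∈ Finset.range (t+1), X i ⁻¹' (Bv i) := by
        ext ω
        simp only [Set.mem_inter_iff, Set.mem_preimage, Set.mem_singleton_iff, Set.mem_iInter,
          Finset.mem_Icc, Finset.mem_range, hBv]
        constructor
        · rintro ⟨h0, h⟩ i hi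
          by_cases hi0 : i = 0
          · simpa [hi0] using h0
          · simpa [hi0] using h i ⟨by omega, by omega⟩
        · intro h
          refine ⟨by simpa using h 0 (by omega), fun s hs => ?_⟩
          have := h s (by omega)
          simpa [show s ≠ 0 by omega] using this
      rw [hDeq]
      rw [hind.meas_biInter (fun i _ => ⟨Bv i, hmV _, rfl⟩)]
      have hprod : ∀ i : ℕ, μ (X i ⁻¹' Bv i) = if i = 0 then p v else 1 - q v := by
        intro i
        rw [hpreim i]
        by_cases hi0 : i = 0
        · simp [hBv, hi0, p.toMeasure_apply_singleton v (hmV _)]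
        · simp [hBv, hi0, hcompl v]
      calc ∏ i ∈ Finset.range (t+1), μ (X i ⁻¹' Bv i)
          = ∏ i ∈ Finset.range (t+1), (if i = 0 then p v else 1 - q v) := by
            exact Finset.prod_congr rfl fun i _ => hprod i
        _ = p v * (1 - q v) ^ t := by
            rw [Finset.prod_range_succ']
            simp [Finset.prod_ite_eq]
            ring
    · -- pairwise disjoint
      intro v w hvw
      apply Set.disjoint_left.mpr
      rintro ω ⟨h1, -⟩ ⟨h2, -⟩
      exact hvw (h1.symm.trans h2)
    · intro v
      exact ((hXm 0) (hmV _)).inter (Finset.measurableSet_biInter _ fun s _ => (hXm s) (hmV _))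
  -- T as a sum of indicators
  have hTeq : ∀ ω, T ω = ∑' t : ℕ, (A t).indicator (fun _ => (1:ℝ≥0∞)) ω := by
    intro ω
    have hind_eq : ∀ t : ℕ, (A t).indicator (fun _ => (1:ℝ≥0∞)) ω
        = if (t : ℝ≥0∞) < T ω then 1 else 0 := by
      intro t; simp [hA_def, Set.indicator_apply]
    simp only [hind_eq]
    by_cases hA' : ∃ s : ℕ, 1 ≤ s ∧
        ∃ j : Fin k, G.dist u (f j (X 0 ω)) ≤ s ∧ X s ω = f j (X 0 ω)
    · -- T ω is a natural number, the least capture time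
      set m := Nat.find hA' with hm
      have hTm : T ω = (m : ℝ≥0∞) := by
        rw [hT ω]
        apply le_antisymm
        · exact sInf_le ⟨m, rfl, Nat.find_spec hA'⟩
        · apply le_sInf
          rintro τ ⟨s, rfl, hs1, j, hjd, hj⟩
          exact_mod_cast Nat.find_min' hA' ⟨hs1, j, hjd, hj⟩
      rw [hTm]
      have : ∀ t : ℕ, ((t : ℝ≥0∞) < (m : ℝ≥0∞)) ↔ t < m := by
        intro t; exact_mod_cast Iff.rfl
      simp only [this]
      rw [tsum_eq_sum (s := Finset.range m)
        (by intro t ht; simp only [Finset.mem_range] at ht; simp [ht])]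
      rw [Finset.sum_ite_of_true (by intro t ht; exact Finset.mem_range.mp ht)]
      simp
    · -- never captured
      have hTtop : T ω = ⊤ := by
        rw [hT ω]
        refine (congrArg sInf (?_ : _ = (∅ : Set ℝ≥0∞))).trans sInf_empty
        ext τ
        simp only [Set.mem_setOf_eq, Set.mem_empty_iff_false, iff_false]
        rintro ⟨s, rfl, hs1, j, hjd, hj⟩
        exact hA' ⟨s, hs1, j, hjd, hj⟩
      rw [hTtop]
      have hlt : ∀ t : ℕ, ((t:ℝ≥0∞) < (⊤:ℝ≥0∞)) := fun t =>
        lt_top_iff_ne_top.mpr (ENNReal.natCast_ne_top t)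
      rw [tsum_congr (fun t => if_pos (hlt t))]
      exact (ENNReal.tsum_const_eq_top_of_ne_zero one_ne_zero).symm
  -- compute the expectation
  have hint : ∫⁻ ω, T ω ∂μ = ∑ v : V, p v * (q v)⁻¹ := by
    calc ∫⁻ ω, T ω ∂μ = ∫⁻ ω, ∑' t : ℕ, (A t).indicator (fun _ => (1:ℝ≥0∞)) ω ∂μ := by
          exact lintegral_congr hTeq
      _ = ∑' t : ℕ, ∫⁻ ω, (A t).indicator (fun _ => (1:ℝ≥0∞)) ω ∂μ :=
          lintegral_tsum fun t => (measurable_const.indicator (hAmeas t)).aemeasurable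
      _ = ∑' t : ℕ, μ (A t) := by
          refine tsum_congr fun t => ?_
          exact lintegral_indicator_one (hAmeas t)
      _ = ∑' t : ℕ, ∑ v : V, p v * (1 - q v) ^ t := tsum_congr hμA
      _ = ∑ v : V, ∑' t : ℕ, p v * (1 - q v) ^ t :=
          Summable.tsum_finsetSum fun v _ => ENNReal.summable
      _ = ∑ v : V, p v * (q v)⁻¹ := by
          refine Finset.sum_congr rfl fun v _ => ?_
          rw [ENNReal.tsum_mul_left, ENNReal.tsum_geometric,
            ENNReal.sub_sub_cancel ENNReal.one_ne_top (hq_le_one v)]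
  -- bound the expectation by k
  have hqB : ∀ v, p.toMeasure {w | blk w = blk v} ≤ q v := by
    intro v
    apply measure_mono
    intro w hw
    exact hcov v w hw
  have hkey : ∑ v : V, p v * (q v)⁻¹ ≤ (k : ℝ≥0∞) := by
    have step1 : ∑ v : V, p v * (q v)⁻¹
        ≤ ∑ v : V, p v * (p.toMeasure {w | blk w = blk v})⁻¹ :=
      Finset.sum_le_sum fun v _ => mul_le_mul_right (ENNReal.inv_le_inv' (hqB v)) _
    have step2 : ∑ v : V, p v * (p.toMeasure {w | blk w = blk v})⁻¹
        = ∑ i : Fin k, ∑ v ∈ Finset.univ.filter (fun v => blk v = i),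
            p v * (p.toMeasure {w | blk w = i})⁻¹ := by
      rw [← Finset.sum_fiberwise Finset.univ blk (fun v => p v * (p.toMeasure {w | blk w = blk v})⁻¹)]
      refine Finset.sum_congr rfl fun i _ => Finset.sum_congr rfl fun v hv => ?_
      simp only [Finset.mem_filter] at hv
      rw [hv.2]
    have step3 : ∀ i : Fin k,
        ∑ v ∈ Finset.univ.filter (fun v => blk v = i), p v * (p.toMeasure {w | blk w = i})⁻¹
        ≤ 1 := by
      intro i
      rw [← Finset.sum_mul]
      have hBi : p.toMeasure {w | blk w = i}
          = ∑ v ∈ Finset.univ.filter (fun v => blk v = i), p v := by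
        have hset : {w | blk w = i} = ↑(Finset.univ.filter (fun v => blk v = i)) := by
          ext w; simp
        rw [hset, p.toMeasure_apply_finset]
      rw [← hBi]
      exact ENNReal.mul_inv_le_one _
    calc ∑ v : V, p v * (q v)⁻¹
        ≤ ∑ i : Fin k, ∑ v ∈ Finset.univ.filter (fun v => blk v = i),
            p v * (p.toMeasure {w | blk w = i})⁻¹ := step1.trans_eq step2
      _ ≤ ∑ _i : Fin k, (1:ℝ≥0∞) := Finset.sum_le_sum fun i _ => step3 i
      _ = (k : ℝ≥0∞) := by simp
  -- final arithmetic
  have h2k : 2 * k ≤ ⌈2 * Real.sqrt n⌉₊ + 1 := by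
    have h1 : (k : ℝ) < Real.sqrt n + 1 := Nat.ceil_lt_add_one hsq
    have h2 : 2 * Real.sqrt n ≤ (⌈2 * Real.sqrt n⌉₊ : ℝ) := Nat.le_ceil _
    have : (2 * k : ℝ) < (⌈2 * Real.sqrt n⌉₊ : ℝ) + 2 := by linarith
    have hnat : 2 * k < ⌈2 * Real.sqrt n⌉₊ + 2 := by exact_mod_cast this
    omega
  calc (k : ℝ≥0∞) + ∫⁻ ω, T ω ∂μ ≤ (k : ℝ≥0∞) + (k : ℝ≥0∞) := by
        rw [hint]; exact add_le_add_right hkey _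
    _ = ((2 * k : ℕ) : ℝ≥0∞) := by push_cast; ring
    _ ≤ ((⌈2 * Real.sqrt n⌉₊ + 1 : ℕ) : ℝ≥0∞) := by exact_mod_cast h2k
    _ < (⌈2 * Real.sqrt n⌉₊ : ℝ≥0∞) + 3 := by
        push_cast
        exact ENNReal.add_lt_add_left (by simp) (by norm_num)
end
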